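/- arXiv:2604.25613 — 3 statements merged into one kernel-verified Lean document; each statement's English description precedes it below -/
import Mathlib

section
/- Let f be a function whose restriction along each coordinate j is of the form φ ↦ A_j sin(φ + B_j) + C_j. Then the partial derivative along coordinate j satisfies the parameter-shift rule: ∂_j f(θ) = (f(θ + (π/2)e_j) − f(θ − (π/2)e_j))/2. -/
open Real

theorem stmt_4 {d : ℕ} (f : (Fin d → ℝ) → ℝ) (θ : Fin d → ℝ) (j : Fin d)
    (A B C : ℝ)
    (hf : ∀ t : ℝ, f (θ + Pi.single j t) = A * Real.sin ((θ j + t) + B) + C) :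
    deriv (fun t : ℝ => f (θ + Pi.single j t)) 0
      = (f (θ + Pi.single j (π/2)) - f (θ - Pi.single j (π/2))) / 2 := by
  have hsub : θ - Pi.single j (π/2) = θ + Pi.single j (-(π/2)) := by
    rw [sub_eq_add_neg, ← Pi.single_neg]
  rw [hsub, hf, hf]
  have : (fun t : ℝ => f (θ + Pi.single j t))
      = (fun t : ℝ => A * Real.sin ((θ j + t) + B) + C) := funext hf
  rw [this]
  have hd : HasDerivAt (fun t : ℝ => A * Real.sin ((θ j + t) + B) + C)
      (A * Real.cos ((θ j + 0) + B)) 0 := by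
    have h1 : HasDerivAt (fun t : ℝ => (θ j + t) + B) 1 0 := by
      simpa using ((hasDerivAt_id (0:ℝ)).const_add (θ j)).add_const B
    simpa using (((h1.sin).const_mul A).add_const C)
  rw [hd.deriv]
  have := Real.sin_add_pi_div_two (θ j + B)
  have := Real.sin_sub_pi_div_two (θ j + B)
  rw [show θ j + π/2 + B = (θ j + B) + π/2 by ring,
      show θ j + -(π/2) + B = (θ j + B) - π/2 by ring,
      Real.sin_add_pi_div_two, Real.sin_sub_pi_div_two]
  ring_nf
end

section
/- Let f be a function whose restriction along coordinate j is φ ↦ A_j sin(φ + B_j) + C_j. Define h_j(θ) = (f(θ + (π/2)e_j) + f(θ − (π/2)e_j) − 2f(θ))/2. Then A_j = √(h_j(θ)² + (∂_j f(θ))²) and C_j = h_j(θ) + f(θ), where ∂_j f(θ) = (f(θ+(π/2)e_j) − f(θ−(π/2)e_j))/2. -/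
open Real

theorem stmt_5 {d : ℕ} (f : (Fin d → ℝ) → ℝ) (θ : Fin d → ℝ) (j : Fin d)
    (A B C : ℝ) (hA : 0 ≤ A)
    (hf : ∀ t : ℝ, f (θ + Pi.single j t) = A * Real.sin ((θ j + t) + B) + C) :
    let dj := (f (θ + Pi.single j (π/2)) - f (θ - Pi.single j (π/2))) / 2
    let hj := (f (θ + Pi.single j (π/2)) + f (θ - Pi.single j (π/2)) - 2 * f θ) / 2
    A = Real.sqrt (hj ^ 2 + dj ^ 2) ∧ C = hj + f θ := by
  intro dj hj
  have h0 : f θ = A * Real.sin (θ j + B) + C := by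
    have := hf 0
    simpa using this
  have hp : f (θ + Pi.single j (π/2)) = A * Real.cos (θ j + B) + C := by
    have := hf (π/2)
    rw [this]
    rw [show (θ j + π/2) + B = (θ j + B) + π/2 by ring, Real.sin_add_pi_div_two]
  have hm : f (θ - Pi.single j (π/2)) = -(A * Real.cos (θ j + B)) + C := by
    have := hf (-(π/2))
    rw [show θ - Pi.single j (π/2) = θ + Pi.single j (-(π/2)) by
      rw [Pi.single_neg, sub_eq_add_neg]]
    rw [this, show (θ j + -(π/2)) + B = (θ j + B) - π/2 by ring, Real.sin_sub_pi_div_two]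
    ring
  have hdj : dj = A * Real.cos (θ j + B) := by
    simp only [dj, hp, hm]; ring
  have hhj : hj = -(A * Real.sin (θ j + B)) := by
    simp only [hj, hp, hm, h0]; ring
  constructor
  · rw [hdj, hhj]
    rw [show (-(A * Real.sin (θ j + B))) ^ 2 + (A * Real.cos (θ j + B)) ^ 2
        = A ^ 2 * (Real.sin (θ j + B) ^ 2 + Real.cos (θ j + B) ^ 2) by ring,
      Real.sin_sq_add_cos_sq, mul_one, Real.sqrt_sq hA]
  · rw [hhj, h0]; ring
end

section
/- Under the hypotheses of the previous recurrence with u = (1+√2)λ_max·d (after accounting for uniform random coordinate selection over d coordinates), if σ² ≤ ε²/(2d) and T ≥ 2(1+√2)dλ_max(F_0 − F*)/ε², then min_{0 ≤ t < T} E[‖∇f(θ^{(t)})‖²] ≤ ε². -/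
theorem stmt_12 (d : ℕ) (hd : 0 < d) (F G : ℕ → ℝ) (Fstar σ lammax ε : ℝ)
    (T : ℕ) (hT : 1 ≤ T)
    (hlam : 0 < lammax) (hε : 0 < ε)
    (hlb : ∀ t, Fstar ≤ F t) (hG : ∀ t, 0 ≤ G t)
    (hrec : ∀ t < T,
      F (t + 1) - F t ≤ -(G t - σ ^ 2 * d) / ((1 + Real.sqrt 2) * lammax * d))
    (hσ : σ ^ 2 ≤ ε ^ 2 / (2 * d))
    (hTbound : 2 * (1 + Real.sqrt 2) * d * lammax * (F 0 - Fstar) / ε ^ 2 ≤ T) :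
    ∃ t < T, G t ≤ ε ^ 2 := by
  by_contra hcon
  push_neg at hcon
  have hs2 : (0:ℝ) < 1 + Real.sqrt 2 := by positivity
  have hdpos : (0:ℝ) < (d:ℝ) := Nat.cast_pos.mpr hd
  set u : ℝ := (1 + Real.sqrt 2) * lammax * (d:ℝ) with hu_def
  have hu : 0 < u := by positivity
  set c : ℝ := ε ^ 2 / (2 * u) with hc_def
  have hc : 0 < c := by positivity
  have hσd : σ ^ 2 * d ≤ ε ^ 2 / 2 := by
    have h := mul_le_mul_of_nonneg_right hσ hdpos.le
    have heq : ε ^ 2 / (2 * (d:ℝ)) * d = ε ^ 2 / 2 := by field_simp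
    linarith [heq ▸ h]
  have hstep : ∀ t < T, F (t + 1) + c < F t := by
    intro t ht
    have h1 := hrec t ht
    have h2 : ε ^ 2 < G t := hcon t ht
    have h3 : -(G t - σ ^ 2 * d) < -(ε ^ 2 / 2) := by linarith
    have h4 : -(G t - σ ^ 2 * d) / u < -(ε ^ 2 / 2) / u :=
      (div_lt_div_iff_of_pos_right hu).mpr h3
    have h5 : -(ε ^ 2 / 2) / u = -c := by
      rw [hc_def, neg_div, div_div]
    rw [h5] at h4
    have h6 : F (t + 1) - F t ≤ -(G t - σ ^ 2 * d) / u := h1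
    linarith
  have hclaim : ∀ n : ℕ, n + 1 ≤ T → F (n + 1) + (n + 1) * c < F 0 := by
    intro n
    induction n with
    | zero => intro h; have := hstep 0 h; push_cast; linarith
    | succ k ih =>
      intro h
      have hk : k + 1 ≤ T := by omega
      have h1 := ih hk
      have h2 := hstep (k + 1) (by omega)
      push_cast at h1 ⊢
      linarith
  obtain ⟨n, rfl⟩ : ∃ n, T = n + 1 := ⟨T - 1, by omega⟩
  have hkey : F (n + 1) + ((n:ℝ) + 1) * c < F 0 := hclaim n le_rfl
  have hFT := hlb (n + 1)
  -- So (T:ℝ) * c < F 0 - Fstar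
  have h7 : ((n:ℝ) + 1) * c < F 0 - Fstar := by linarith
  have h8 : ((n:ℝ) + 1) * ε ^ 2 < 2 * u * (F 0 - Fstar) := by
    rw [hc_def] at h7
    have h7' : ((n:ℝ) + 1) * ε ^ 2 / (2 * u) < F 0 - Fstar := by
      rw [mul_div_assoc]; exact h7
    have := (div_lt_iff₀ (by positivity : (0:ℝ) < 2 * u)).mp h7'
    linarith [this, (by ring : (F 0 - Fstar) * (2 * u) = 2 * u * (F 0 - Fstar))]
  have h9 : 2 * u * (F 0 - Fstar) ≤ ((n:ℝ) + 1) * ε ^ 2 := by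
    have h10 := (div_le_iff₀ (by positivity : (0:ℝ) < ε ^ 2)).mp hTbound
    push_cast at h10
    calc 2 * u * (F 0 - Fstar) = 2 * (1 + Real.sqrt 2) * d * lammax * (F 0 - Fstar) := by
          rw [hu_def]; ring
      _ ≤ ((n:ℝ) + 1) * ε ^ 2 := h10
  linarith
end
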